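/- Let R be a Bézout domain, r a natural number, and a_1, …, a_{r+1} elements of R that generate the unit ideal. Then the quotient of the free module R^{r+1} by the cyclic submodule generated by the vector (a_1, …, a_{r+1}) is a free R-module of rank r. -/

import Mathlib

universe u

open Submodule

lemma free_of_fg_inj (R : Type u) [CommRing R] [IsDomain R] [IsBezout R] :
    ∀ (n : ℕ) (M : Type u) [AddCommGroup M] [Module R M] [Module.Finite R M]
      (f : M →ₗ[R] (Fin n → R)), Function.Injective f → Module.Free R M := by
  intro n
  induction n with
  | zero =>
    intro M _ _ _ f hf
    haveI : Subsingleton M := ⟨fun x y => hf (Subsingleton.elim _ _)⟩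
    exact Module.Free.of_subsingleton R M
  | succ n ih =>
    intro M _ _ _ f hf
    set g : M →ₗ[R] R := (LinearMap.proj (Fin.last n)).comp f with hg
    have hrg : (LinearMap.range g).FG := by
      rw [← Submodule.map_top]
      exact (Module.finite_def.mp inferInstance).map g
    have hP : (LinearMap.range g).IsPrincipal := IsBezout.isPrincipal_of_FG _ hrg
    set d : R := Submodule.IsPrincipal.generator (LinearMap.range g) with hd
    have hspan : Submodule.span R {d} = LinearMap.range g :=
      Submodule.IsPrincipal.span_singleton_generator _
    by_cases hd0 : d = 0
    · -- g = 0
      have hg0 : g = 0 := by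
        rw [← LinearMap.range_eq_bot, ← hspan, hd0]
        simp
      set f' : M →ₗ[R] (Fin n → R) := (LinearMap.funLeft R R Fin.castSucc).comp f with hf'
      apply ih M f'
      intro x y hxy
      apply hf
      funext i
      refine Fin.lastCases ?_ ?_ i
      · have hx : g x = 0 := by rw [hg0]; rfl
        have hy : g y = 0 := by rw [hg0]; rfl
        simpa [hg] using hx.trans hy.symm
      · intro j
        exact congrFun hxy j
    · -- d ≠ 0
      set e := LinearEquiv.toSpanNonzeroSingleton R R d hd0 with he
      have hgx : ∀ x : M, g x ∈ Submodule.span R {d} := fun x => hspan ▸ LinearMap.mem_range_self g x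
      set φ : M →ₗ[R] R := (e.symm : (R ∙ d) →ₗ[R] R).comp (g.codRestrict (R ∙ d) hgx) with hφ
      have hφd : ∀ x : M, φ x * d = g x := by
        intro x
        have : (e (φ x) : R) = g x := congrArg (Subtype.val) (e.apply_symm_apply ⟨g x, hgx x⟩)
        simpa [he, LinearEquiv.toSpanNonzeroSingleton_apply, smul_eq_mul] using this
      obtain ⟨m, hm⟩ : d ∈ LinearMap.range g := by rw [← hspan]; exact Submodule.mem_span_singleton_self d
      have hφm : φ m = 1 := by
        have h1 := hφd m
        rw [hm] at h1
        have h2 : (φ m - 1) * d = 0 := by rw [sub_mul, one_mul, h1, sub_self]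
        rcases mul_eq_zero.mp h2 with h | h
        · exact sub_eq_zero.mp h
        · exact absurd h hd0
      have hgker : ∀ x : M, φ x = 0 → g x = 0 := by
        intro x hx
        rw [← hφd x, hx, zero_mul]
      set p : M →ₗ[R] M := LinearMap.id - (LinearMap.toSpanSingleton R M m).comp φ with hp
      have hpap : ∀ x : M, p x = x - φ x • m := fun x => rfl
      have hpφ : ∀ x : M, φ (p x) = 0 := by
        intro x
        rw [hpap, map_sub, map_smul, hφm, smul_eq_mul, mul_one, sub_self]
      set N := LinearMap.ker φ with hN
      set pc : M →ₗ[R] N := p.codRestrict N (fun x => LinearMap.mem_ker.mpr (hpφ x)) with hpc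
      have hpcsurj : Function.Surjective pc := by
        intro ⟨x, hx⟩
        refine ⟨x, ?_⟩
        apply Subtype.ext
        show p x = x
        rw [hpap, LinearMap.mem_ker.mp hx, zero_smul, sub_zero]
      haveI : Module.Finite R N := Module.Finite.of_surjective pc hpcsurj
      -- N is free by induction
      haveI : Module.Free R N := by
        apply ih N ((LinearMap.funLeft R R Fin.castSucc).comp (f.comp N.subtype))
        intro ⟨x, hx⟩ ⟨y, hy⟩ hxy
        apply Subtype.ext
        apply hf
        funext i
        refine Fin.lastCases ?_ ?_ i
        · have hx' : f x (Fin.last n) = 0 := hgker x (LinearMap.mem_ker.mp hx)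
          have hy' : f y (Fin.last n) = 0 := hgker y (LinearMap.mem_ker.mp hy)
          rw [hx', hy']
        · intro j
          exact congrFun hxy j
      -- M ≃ N × R
      have hprod : Nonempty (M ≃ₗ[R] N × R) := by
        refine ⟨{
          toFun := fun x => (pc x, φ x)
          map_add' := fun x y => by simp
          map_smul' := fun c x => by simp
          invFun := fun q => (q.1 : M) + q.2 • m
          left_inv := ?_
          right_inv := ?_ }⟩
        · intro x
          show p x + φ x • m = x
          rw [hpap, sub_add_cancel]
        · rintro ⟨⟨x, hx⟩, c⟩
          have hφx : φ x = 0 := LinearMap.mem_ker.mp hx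
          have h1 : pc (x + c • m) = ⟨x, hx⟩ := by
            apply Subtype.ext
            show p (x + c • m) = x
            rw [hpap, map_add, map_smul, hφm, smul_eq_mul, mul_one, hφx,
              zero_add, add_sub_cancel_right]
          have h2 : φ (x + c • m) = c := by
            rw [map_add, map_smul, hφm, smul_eq_mul, mul_one, hφx, zero_add]
          simp [h1, h2]
      exact Module.Free.of_equiv hprod.some.symm

/-- Over a Bézout domain, the quotient of `R^(r+1)` by the cyclic submodule generated by a
unimodular vector `(a 0, …, a r)` is free of rank `r`. -/
theorem quotient_span_unimodular_free (R : Type u) [CommRing R] [IsDomain R] [IsBezout R]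
    (r : ℕ) (a : Fin (r + 1) → R) (ha : Ideal.span (Set.range a) = ⊤) :
    Nonempty (((Fin (r + 1) → R) ⧸ Submodule.span R {a}) ≃ₗ[R] (Fin r → R)) := by
  classical
  -- obtain the coefficients witnessing unimodularity
  have h1 : (1 : R) ∈ Ideal.span (Set.range a) := ha ▸ Submodule.mem_top
  obtain ⟨b, hb⟩ := (mem_span_range_iff_exists_fun R).mp h1
  let M := Fin (r + 1) → R
  set ρ : M →ₗ[R] R := ∑ i, b i • LinearMap.proj i with hρ
  have hρap : ∀ v : M, ρ v = ∑ i, b i * v i := by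
    intro v
    rw [hρ, LinearMap.sum_apply]
    simp only [LinearMap.smul_apply, smul_eq_mul]
    rfl
  have hρa : ρ a = 1 := by
    rw [hρap]
    simpa [smul_eq_mul] using hb
  set π : M →ₗ[R] M := LinearMap.id - (LinearMap.toSpanSingleton R M a).comp ρ with hπ
  have hπap : ∀ v : M, π v = v - ρ v • a := fun _ => rfl
  set S := Submodule.span R {a} with hS
  have hSπ : S ≤ LinearMap.ker π := by
    rw [hS, Submodule.span_le, Set.singleton_subset_iff]
    show π a = 0
    rw [hπap, hρa, one_smul, sub_self]
  set π' : (M ⧸ S) →ₗ[R] M := S.liftQ π hSπ with hπ'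
  have hπ'inj : Function.Injective π' := by
    rw [← LinearMap.ker_eq_bot]
    apply Submodule.ker_liftQ_eq_bot
    intro v hv
    have : v - ρ v • a = 0 := LinearMap.mem_ker.mp hv
    have hv' : v = ρ v • a := by rwa [sub_eq_zero] at this
    rw [hv']
    exact Submodule.smul_mem _ _ (Submodule.mem_span_singleton_self a)
  haveI : Module.Finite R (M ⧸ S) := Module.Finite.of_surjective S.mkQ (Submodule.mkQ_surjective S)
  haveI : Module.Free R (M ⧸ S) := free_of_fg_inj R (r + 1) (M ⧸ S) π' hπ'inj
  have hρπ : ∀ v : M, ρ (π v) = 0 := by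
    intro v
    rw [hπap, map_sub, map_smul, hρa, smul_eq_mul, mul_one, sub_self]
  -- M ≃ (M ⧸ S) × R
  have E : M ≃ₗ[R] (M ⧸ S) × R := {
    toFun := fun v => (S.mkQ v, ρ v)
    map_add' := fun x y => by simp
    map_smul' := fun c x => by simp
    invFun := fun q => π' q.1 + q.2 • a
    left_inv := by
      intro v
      show π' (S.mkQ v) + ρ v • a = v
      have h0 : π' (S.mkQ v) = π v := rfl
      rw [h0, hπap, sub_add_cancel]
    right_inv := by
      rintro ⟨q, c⟩
      obtain ⟨w, rfl⟩ := Submodule.mkQ_surjective S q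
      show (S.mkQ (π' (S.mkQ w) + c • a), ρ (π' (S.mkQ w) + c • a)) = (S.mkQ w, c)
      have hπ'w : π' (S.mkQ w) = π w := rfl
      have h2 : ρ (π' (S.mkQ w) + c • a) = c := by
        rw [hπ'w, map_add, hρπ, map_smul, hρa, smul_eq_mul, mul_one, zero_add]
      have h3 : S.mkQ (π' (S.mkQ w) + c • a) = S.mkQ w := by
        rw [hπ'w, hπap]
        have ha1 : S.mkQ (ρ w • a) = 0 := by
          rw [← LinearMap.mem_ker, Submodule.ker_mkQ]
          exact Submodule.smul_mem _ _ (Submodule.mem_span_singleton_self a)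
        have ha2 : S.mkQ (c • a) = 0 := by
          rw [← LinearMap.mem_ker, Submodule.ker_mkQ]
          exact Submodule.smul_mem _ _ (Submodule.mem_span_singleton_self a)
        rw [map_add, map_sub, ha1, ha2, sub_zero, add_zero]
      exact Prod.ext h3 h2 }
  have hrk : Module.finrank R (M ⧸ S) = r := by
    have h4 : Module.finrank R M = r + 1 := by
      simp [M]
    have h5 : Module.finrank R ((M ⧸ S) × R) = Module.finrank R (M ⧸ S) + 1 := by
      rw [Module.finrank_prod, Module.finrank_self]
    have h6 := E.finrank_eq
    omega
  exact ⟨(Module.finBasisOfFinrankEq R (M ⧸ S) hrk).equivFun⟩
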